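/- The tournaments T_n, U_n, and W_n are each isomorphic to their own duals, for every odd n ≥ 1. -/

import Mathlib

/-- A tournament: irreflexive, and between any two distinct vertices exactly one edge. -/
def IsTournament {V : Type*} (r : V → V → Prop) : Prop :=
  (∀ v, ¬ r v v) ∧ ∀ u v : V, u ≠ v → (r u v ↔ ¬ r v u)

/-- A homogeneous set. -/
def IsHomog {V : Type*} (r : V → V → Prop) (X : Set V) : Prop :=
  ∀ v ∉ X, (∀ x ∈ X, r v x) ∨ (∀ x ∈ X, r x v)

/-- A prime tournament: every homogeneous set is trivial. -/
def IsPrime {V : Type*} (r : V → V → Prop) : Prop :=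
  ∀ X : Set V, IsHomog r X → X.Subsingleton ∨ X = Set.univ

/-- A set of vertices is transitive: it induces no cyclic triangle. -/
def IsTransOn {V : Type*} (r : V → V → Prop) (X : Set V) : Prop :=
  ∀ a ∈ X, ∀ b ∈ X, ∀ c ∈ X, ¬ (r a b ∧ r b c ∧ r c a)

/-- The tournament T_n: vertices v_1,...,v_n (here indices 0,...,n-1), with
v_i → v_j iff j - i ≡ 1, ..., (n-1)/2 (mod n). -/
def Tn (n : ℕ) (i j : Fin n) : Prop :=
  1 ≤ (j.val + n - i.val) % n ∧ (j.val + n - i.val) % n ≤ (n - 1) / 2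

/-- U_n: obtained from T_n by reversing all edges with both ends among the
first (n-1)/2 vertices. -/
def Un (n : ℕ) (i j : Fin n) : Prop :=
  if i.val < (n - 1) / 2 ∧ j.val < (n - 1) / 2 then Tn n j i else Tn n i j

/-- The tournament W_n: vertex 0 is v, vertex k (1 ≤ k ≤ n-1) is w_k;
w_i → w_j for i < j, w_i → v for even i, v → w_i for odd i. -/
def Wn (n : ℕ) (i j : Fin n) : Prop :=
  if i.val = 0 then j.val % 2 = 1
  else if j.val = 0 then i.val % 2 = 0
  else i.val < j.val

lemma tn_iff (n : ℕ) [NeZero n] (i j : Fin n) :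
    Tn n i j ↔ 1 ≤ (j - i).val ∧ (j - i).val ≤ (n - 1) / 2 := by
  have hi : i.val ≤ n := i.isLt.le
  have : j.val + n - i.val = j.val + (n - i.val) := by omega
  rw [Tn, this, Fin.sub_def, Nat.add_comm (n - i.val) j.val]

lemma tn_shift (n : ℕ) [NeZero n] (c a b : Fin n) :
    Tn n a b ↔ Tn n (c - b) (c - a) := by
  rw [tn_iff, tn_iff]
  have : (c - a) - (c - b) = b - a := by abel
  rw [this]

/-- T_n, U_n, and W_n are each isomorphic to their own duals, for every odd n ≥ 1. -/
theorem TUW_self_dual (n : ℕ) (hodd : Odd n) (h1 : 1 ≤ n) :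
    (∃ e : Fin n ≃ Fin n, ∀ i j, Tn n i j ↔ Tn n (e j) (e i)) ∧
    (∃ e : Fin n ≃ Fin n, ∀ i j, Un n i j ↔ Un n (e j) (e i)) ∧
    (∃ e : Fin n ≃ Fin n, ∀ i j, Wn n i j ↔ Wn n (e j) (e i)) := by
  have : NeZero n := ⟨by omega⟩
  have hn2 : n % 2 = 1 := Nat.odd_iff.mp hodd
  set m := (n - 1) / 2 with hm
  have hmn : m < n := by omega
  -- the negation equiv
  refine ⟨⟨Equiv.neg (Fin n), ?_⟩, ?_, ⟨Equiv.neg (Fin n), ?_⟩⟩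
  · intro i j
    simp only [Equiv.neg_apply]
    rw [tn_iff, tn_iff]
    have : (-i) - (-j) = j - i := by abel
    rw [this]
  · -- U_n
    refine ⟨Equiv.subLeft (⟨m - 1, by omega⟩ : Fin n), ?_⟩
    set c : Fin n := ⟨m - 1, by omega⟩ with hc
    have key : ∀ x : Fin n, (c - x).val < m ↔ x.val < m := by
      intro x
      rw [Fin.sub_def]
      simp only [hc]
      by_cases hx : x.val < m
      · have he : n - x.val + (m - 1) = n + (m - 1 - x.val) := by omega
        rw [he, Nat.add_mod_left, Nat.mod_eq_of_lt (by omega)]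
        omega
      · rcases Nat.eq_zero_or_pos m with h0 | h0
        · omega
        · have hxl : x.val < n := x.isLt
          rw [Nat.mod_eq_of_lt (by omega)]
          omega
    intro i j
    simp only [Equiv.subLeft_apply]
    rw [Un, Un]
    simp only [← hm]
    by_cases h : i.val < m ∧ j.val < m
    · rw [if_pos h, if_pos ⟨(key j).mpr h.2, (key i).mpr h.1⟩]
      exact tn_shift n c j i
    · rw [if_neg h, if_neg (fun hh => h ⟨(key i).mp hh.2, (key j).mp hh.1⟩)]
      exact tn_shift n c i j
  · -- W_n
    intro i j
    simp only [Equiv.neg_apply]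
    have hi : (-i).val = (n - i.val) % n := by rw [Fin.neg_def]
    have hj : (-j).val = (n - j.val) % n := by rw [Fin.neg_def]
    have hiv : i.val < n := i.isLt
    have hjv : j.val < n := j.isLt
    by_cases h0i : i.val = 0 <;> by_cases h0j : j.val = 0
    · have g1 : (-i).val = 0 := by rw [hi, h0i, Nat.sub_zero, Nat.mod_self]
      have g2 : (-j).val = 0 := by rw [hj, h0j, Nat.sub_zero, Nat.mod_self]
      rw [Wn, Wn, if_pos h0i, if_pos g2, g1]
      omega
    · have g1 : (-i).val = 0 := by rw [hi, h0i, Nat.sub_zero, Nat.mod_self]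
      have g2 : (-j).val = n - j.val := by rw [hj, Nat.mod_eq_of_lt (by omega)]
      rw [Wn, Wn, if_pos h0i, if_neg (by omega : ¬ (-j).val = 0), if_pos g1, g2]
      omega
    · have g1 : (-i).val = n - i.val := by rw [hi, Nat.mod_eq_of_lt (by omega)]
      have g2 : (-j).val = 0 := by rw [hj, h0j, Nat.sub_zero, Nat.mod_self]
      rw [Wn, Wn, if_neg h0i, if_pos h0j, if_pos g2, g1]
      omega
    · have g1 : (-i).val = n - i.val := by rw [hi, Nat.mod_eq_of_lt (by omega)]
      have g2 : (-j).val = 0 ∨ True := Or.inr trivial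
      have g3 : (-j).val = n - j.val := by rw [hj, Nat.mod_eq_of_lt (by omega)]
      rw [Wn, Wn, if_neg h0i, if_neg h0j, if_neg (by omega : ¬ (-j).val = 0),
        if_neg (by omega : ¬ (-i).val = 0), g1, g3]
      omega
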